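/- The polynomial q has exactly one positive real root z₂, this root is simple, and every complex root w of q satisfies |w| ≤ z₂. -/

import Mathlib

open Polynomial

/-- The polynomial `q` has exactly one positive real root `z₂`, this root is simple, and
every complex root `w` of `q` satisfies `|w| ≤ z₂`. -/
theorem stmt_9 (m : ℕ) (hm : 2 ≤ m) (f : ℕ → ℝ)
    (hfnonneg : ∀ k, 0 ≤ f k) (hfsum : ∑ k ∈ Finset.range (m + 1), f k = 1)
    (hf0 : 0 < f 0) (hfm : 0 < f m)
    (Fbar : ℕ → ℝ)
    (hFbar : ∀ k, Fbar k = ∑ j ∈ Finset.Icc (k + 1) m, f j)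
    (q : Polynomial ℝ)
    (hq : q = X ^ (m - 1) -
        ∑ k ∈ Finset.Icc 1 (m - 1), C (Fbar k / f 0) * X ^ (m - 1 - k)) :
    ∃ z₂ : ℝ, 0 < z₂ ∧ q.eval z₂ = 0 ∧
      (∀ x : ℝ, 0 < x → q.eval x = 0 → x = z₂) ∧
      q.rootMultiplicity z₂ = 1 ∧
      (∀ w : ℂ, Polynomial.aeval w q = 0 → ‖w‖ ≤ z₂) := by
  set n := m - 1 with hn'
  have hn : 1 ≤ n := by omega
  set c : ℕ → ℝ := fun k => Fbar k / f 0 with hc'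
  have hFnn : ∀ k, 0 ≤ Fbar k := fun k => by
    rw [hFbar]; exact Finset.sum_nonneg fun j _ => hfnonneg j
  have hcnn : ∀ k, 0 ≤ c k := fun k => div_nonneg (hFnn k) hf0.le
  have h1n : 1 ∈ Finset.Icc 1 n := Finset.mem_Icc.mpr ⟨le_refl 1, hn⟩
  have hc1 : 0 < c 1 := by
    have h1 : f m ≤ Fbar 1 := by
      rw [hFbar]
      exact Finset.single_le_sum (fun j _ => hfnonneg j) (Finset.mem_Icc.mpr ⟨hm, le_refl m⟩)
    exact div_pos (lt_of_lt_of_le hfm h1) hf0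
  have hcn : 0 < c n := by
    have hFn : Fbar n = f m := by
      rw [hFbar]
      have hnm : n + 1 = m := by omega
      rw [hnm, Finset.Icc_self, Finset.sum_singleton]
    simp only [hc', hFn]
    exact div_pos hfm hf0
  -- evaluation formula
  have he : ∀ x : ℝ, q.eval x = x ^ n - ∑ k ∈ Finset.Icc 1 n, c k * x ^ (n - k) := by
    intro x
    simp [hq, eval_finset_sum]
    rfl
  -- existence of a positive root via IVT
  set C0 : ℝ := ∑ k ∈ Finset.Icc 1 n, c k with hC0'
  have hC0pos : 0 < C0 := Finset.sum_pos' (fun k _ => hcnn k) ⟨1, h1n, hc1⟩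
  set a : ℝ := min 1 (c n) / 2 with ha'
  have hapos : 0 < a := by positivity
  have ha1 : a ≤ 1 / 2 := by
    have := min_le_left 1 (c n); simp only [ha']; linarith
  have hqa : q.eval a < 0 := by
    rw [he]
    have h1 : c n * a ^ (n - n) ≤ ∑ k ∈ Finset.Icc 1 n, c k * a ^ (n - k) :=
      Finset.single_le_sum (f := fun k => c k * a ^ (n - k))
        (fun k _ => mul_nonneg (hcnn k) (by positivity))
        (Finset.mem_Icc.mpr ⟨hn, le_refl n⟩)
    have h2 : a ^ n ≤ a := by
      calc a ^ n ≤ a ^ 1 := pow_le_pow_of_le_one hapos.le (by linarith) hn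
      _ = a := pow_one a
    have h3 : a < c n := by
      have := min_le_right 1 (c n); simp only [ha'] at *; linarith
    simp only [Nat.sub_self, pow_zero, mul_one] at h1
    linarith
  set b : ℝ := 1 + C0 with hb'
  have hb1 : 1 ≤ b := by linarith
  have hqb : 0 < q.eval b := by
    rw [he]
    have h1 : ∑ k ∈ Finset.Icc 1 n, c k * b ^ (n - k) ≤ C0 * b ^ (n - 1) := by
      rw [hC0', Finset.sum_mul]
      refine Finset.sum_le_sum fun k hk => ?_
      have hk1 : 1 ≤ k := (Finset.mem_Icc.mp hk).1
      exact mul_le_mul_of_nonneg_left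
        (pow_le_pow_right₀ hb1 (by omega)) (hcnn k)
    have h2 : C0 * b ^ (n - 1) < b * b ^ (n - 1) := by
      have : (0:ℝ) < b ^ (n - 1) := by positivity
      nlinarith
    have h3 : b * b ^ (n - 1) = b ^ n := by
      rw [← pow_succ']
      congr 1; omega
    linarith
  have hab : a ≤ b := by linarith
  have hcont : ContinuousOn (fun x => q.eval x) (Set.Icc a b) :=
    (Polynomial.continuous q).continuousOn
  obtain ⟨z, hzmem, hz0⟩ := intermediate_value_Icc hab hcont
    (Set.mem_Icc.mpr ⟨hqa.le, hqb.le⟩)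
  have hzpos : 0 < z := lt_of_lt_of_le hapos hzmem.1
  have hz0 : q.eval z = 0 := hz0
  -- key sum identity at the root
  have hzsum : z ^ n = ∑ k ∈ Finset.Icc 1 n, c k * z ^ (n - k) := by
    have h := he z; rw [hz0] at h; linarith
  have hkey : ∀ x : ℝ, q.eval x * z ^ n =
      ∑ k ∈ Finset.Icc 1 n, c k * x ^ (n - k) * z ^ (n - k) * (x ^ k - z ^ k) := by
    intro x
    have expand : ∀ k ∈ Finset.Icc 1 n,
        c k * x ^ (n - k) * z ^ (n - k) * (x ^ k - z ^ k)
          = c k * z ^ (n - k) * x ^ n - c k * x ^ (n - k) * z ^ n := by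
      intro k hk
      have hkn : k ≤ n := (Finset.mem_Icc.mp hk).2
      have hx : x ^ (n - k) * x ^ k = x ^ n := pow_sub_mul_pow x hkn
      have hz : z ^ (n - k) * z ^ k = z ^ n := pow_sub_mul_pow z hkn
      calc c k * x ^ (n - k) * z ^ (n - k) * (x ^ k - z ^ k)
          = c k * z ^ (n - k) * (x ^ (n - k) * x ^ k)
            - c k * x ^ (n - k) * (z ^ (n - k) * z ^ k) := by ring
        _ = c k * z ^ (n - k) * x ^ n - c k * x ^ (n - k) * z ^ n := by rw [hx, hz]
    rw [Finset.sum_congr rfl expand, Finset.sum_sub_distrib, ← Finset.sum_mul,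
      ← Finset.sum_mul, ← hzsum, he x]
    ring
  have hznpos : 0 < z ^ n := by positivity
  -- sign lemmas
  have hneg : ∀ x : ℝ, 0 < x → x < z → q.eval x < 0 := by
    intro x hx hxz
    have hsum : ∑ k ∈ Finset.Icc 1 n, c k * x ^ (n - k) * z ^ (n - k) * (x ^ k - z ^ k) < 0 := by
      refine Finset.sum_neg' (fun k hk => ?_) ⟨1, h1n, ?_⟩
      · have hxk : x ^ k ≤ z ^ k := pow_le_pow_left₀ hx.le hxz.le k
        have h0 : (0:ℝ) ≤ c k * x ^ (n - k) * z ^ (n - k) :=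
          mul_nonneg (mul_nonneg (hcnn k) (by positivity)) (by positivity)
        exact mul_nonpos_of_nonneg_of_nonpos h0 (by linarith)
      · have hxk : x ^ 1 < z ^ 1 := by simpa using hxz
        have h1 : (0:ℝ) < c 1 * x ^ (n - 1) * z ^ (n - 1) :=
          mul_pos (mul_pos hc1 (pow_pos hx _)) (pow_pos hzpos _)
        exact mul_neg_of_pos_of_neg h1 (by linarith)
    nlinarith [hkey x, hsum, hznpos]
  have hpos : ∀ x : ℝ, z < x → 0 < q.eval x := by
    intro x hzx
    have hx : 0 < x := lt_trans hzpos hzx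
    have hsum : 0 < ∑ k ∈ Finset.Icc 1 n, c k * x ^ (n - k) * z ^ (n - k) * (x ^ k - z ^ k) := by
      refine Finset.sum_pos' (fun k hk => ?_) ⟨1, h1n, ?_⟩
      · have hxk : z ^ k ≤ x ^ k := pow_le_pow_left₀ hzpos.le hzx.le k
        have h0 : (0:ℝ) ≤ c k * x ^ (n - k) * z ^ (n - k) :=
          mul_nonneg (mul_nonneg (hcnn k) (by positivity)) (by positivity)
        exact mul_nonneg h0 (by linarith)
      · have hxk : z ^ 1 < x ^ 1 := by simpa using hzx
        have h1 : (0:ℝ) < c 1 * x ^ (n - 1) * z ^ (n - 1) :=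
          mul_pos (mul_pos hc1 (pow_pos hx _)) (pow_pos hzpos _)
        exact mul_pos h1 (by linarith)
    nlinarith [hkey x, hsum, hznpos]
  have huniq : ∀ x : ℝ, 0 < x → q.eval x = 0 → x = z := by
    intro x hx hqx
    rcases lt_trichotomy x z with h | h | h
    · exact absurd hqx (ne_of_lt (hneg x hx h))
    · exact h
    · exact absurd hqx (ne_of_gt (hpos x h))
  have hqne : q ≠ 0 := fun h => by rw [h] at hqb; simp at hqb
  -- simplicity
  have hderiv : 0 < (derivative q).eval z := by
    have hd : (derivative q).eval z
        = n * z ^ (n - 1) - ∑ k ∈ Finset.Icc 1 n, c k * ((n - k : ℕ) * z ^ (n - k - 1)) := by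
      rw [hq, derivative_sub, derivative_X_pow, derivative_sum]
      simp only [derivative_C_mul, derivative_X_pow, eval_sub, eval_mul, eval_pow,
        eval_natCast, eval_finset_sum, eval_C, eval_X]
      rfl
    have hmulz : (derivative q).eval z * z
        = ∑ k ∈ Finset.Icc 1 n, c k * k * z ^ (n - k) := by
      rw [hd, sub_mul, Finset.sum_mul]
      have hterm : ∀ k ∈ Finset.Icc 1 n,
          c k * ((n - k : ℕ) * z ^ (n - k - 1)) * z = (n - k : ℕ) * (c k * z ^ (n - k)) := by
        intro k hk
        have hkn := (Finset.mem_Icc.mp hk).2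
        rcases eq_or_lt_of_le hkn with h | h
        · subst h; simp
        · have : z ^ (n - k - 1) * z = z ^ (n - k) := by
            rw [← pow_succ]; congr 1; omega
          rw [← this]; ring
      rw [Finset.sum_congr rfl hterm]
      have h1 : (n:ℝ) * z ^ (n - 1) * z = n * z ^ n := by
        have : z ^ (n - 1) * z = z ^ n := by
          rw [← pow_succ]; congr 1; omega
        rw [← this]; ring
      rw [h1, hzsum, Finset.mul_sum, ← Finset.sum_sub_distrib]
      refine Finset.sum_congr rfl fun k hk => ?_
      have hkn := (Finset.mem_Icc.mp hk)
      have : ((n - k : ℕ) : ℝ) = (n : ℝ) - (k : ℝ) := by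
        rw [Nat.cast_sub hkn.2]
      rw [this]; ring
    have hsum : 0 < ∑ k ∈ Finset.Icc 1 n, c k * k * z ^ (n - k) := by
      refine Finset.sum_pos' (fun k hk =>
        mul_nonneg (mul_nonneg (hcnn k) (Nat.cast_nonneg k)) (by positivity)) ⟨1, h1n, ?_⟩
      have h : (0:ℝ) < c 1 * 1 * z ^ (n - 1) :=
        mul_pos (mul_pos hc1 one_pos) (pow_pos hzpos _)
      simpa using h
    nlinarith [hmulz, hsum]
  have hmult : q.rootMultiplicity z = 1 := by
    have h1 : 1 ≤ q.rootMultiplicity z := (Polynomial.rootMultiplicity_pos hqne).mpr hz0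
    have h2 : ¬ 1 < q.rootMultiplicity z := by
      rw [Polynomial.one_lt_rootMultiplicity_iff_isRoot hqne]
      rintro ⟨_, hd⟩
      exact absurd hd (ne_of_gt hderiv)
    omega
  -- complex roots
  refine ⟨z, hzpos, hz0, huniq, hmult, fun w hw => ?_⟩
  have hwn : w ^ n = ∑ k ∈ Finset.Icc 1 n, (c k : ℂ) * w ^ (n - k) := by
    rw [hq] at hw
    simp [map_sub, map_pow, map_sum, sub_eq_zero] at hw
    rw [hw]
    exact Finset.sum_congr rfl fun k _ => by rw [hc']; push_cast; ring
  set r : ℝ := ‖w‖ with hr'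
  have hrn : r ^ n ≤ ∑ k ∈ Finset.Icc 1 n, c k * r ^ (n - k) := by
    calc r ^ n = ‖w ^ n‖ := by rw [norm_pow]
      _ = ‖∑ k ∈ Finset.Icc 1 n, (c k : ℂ) * w ^ (n - k)‖ := by rw [hwn]
      _ ≤ ∑ k ∈ Finset.Icc 1 n, ‖(c k : ℂ) * w ^ (n - k)‖ :=
          norm_sum_le _ _
      _ = ∑ k ∈ Finset.Icc 1 n, c k * r ^ (n - k) := by
          refine Finset.sum_congr rfl fun k hk => ?_
          rw [norm_mul, norm_pow, Complex.norm_real, Real.norm_eq_abs, abs_of_nonneg (hcnn k)]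
  by_contra hcon
  push_neg at hcon
  have hqr : 0 < q.eval r := hpos r hcon
  rw [he] at hqr
  linarith
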